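/- For every x ∈ (0,1), G(1−x) = 1 − G(x). -/

import Mathlib

noncomputable def G (x : ℝ) : ℝ := x^4 * (15 - 4*x - 10*x^2 / (1 - 2*x*(1-x)))

theorem G_symm (x : ℝ) (hx : x ∈ Set.Ioo (0:ℝ) 1) : G (1 - x) = 1 - G x := by
  have h : (1 - 2*x*(1-x)) ≠ 0 := by nlinarith [sq_nonneg (2*x - 1)]
  have e : (1 - 2*(1-x)*(1-(1-x))) = 1 - 2*x*(1-x) := by ring
  unfold G
  rw [e]
  have h' : 1 - x * (1 - x) * 2 ≠ 0 := by intro hc; apply h; linarith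
  field_simp
  ring
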